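/- Let G be a graph on the vertex set [n−1] with n ≥ 3, and let v be a vertex of G with N_G[v] = [n−1] (i.e., v is adjacent to every other vertex of G). Then N(P_{Ĝ}) = N(P_{(G−v)^}) + N(P_{(G/v)^}) + 2, where (·)^ denotes suspension. -/

import Mathlib

open Finset

/-- The symmetric edge polytope of a finite simple graph `G`: the convex hull of the
vectors `e_i - e_j` for all adjacent pairs `i, j`. -/
def symEdgePolytope {V : Type*} [DecidableEq V] (G : SimpleGraph V) : Set (V → ℝ) :=
  convexHull ℝ {x : V → ℝ | ∃ i j : V, G.Adj i j ∧
    x = fun k => (if k = i then (1 : ℝ) else 0) - (if k = j then (1 : ℝ) else 0)}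

/-- A facet of a polytope `P`: a maximal proper (exposed) face of `P`. -/
def IsFacet {V : Type*} (P F : Set (V → ℝ)) : Prop :=
  IsExposed ℝ P F ∧ F ≠ P ∧
    ∀ F' : Set (V → ℝ), IsExposed ℝ P F' → F' ≠ P → F ⊆ F' → F' = F

/-- `N(P)`: the number of facets of a polytope `P`. -/
noncomputable def numFacets {V : Type*} (P : Set (V → ℝ)) : ℕ :=
  Set.ncard {F : Set (V → ℝ) | IsFacet P F}

/-- The suspension `Ĝ` of a graph `G`: a new apex vertex (`none`) is joined to all
vertices of `G`. -/
def suspension {V : Type*} (G : SimpleGraph V) : SimpleGraph (Option V) where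
  Adj x y :=
    match x, y with
    | some a, some b => G.Adj a b
    | some _, none => True
    | none, some _ => True
    | none, none => False
  symm := by
    constructor
    rintro (_ | a) (_ | b) h
    · exact h
    · trivial
    · trivial
    · exact h.symm
  loopless := by
    constructor
    rintro (_ | a) h
    · exact h
    · exact G.irrefl h

/-- The graph `G/v` obtained from `G` by deleting the vertex `v` and inserting all edges
`{i, j}` with `i, j ∈ N_G(v)`, `i ≠ j`. -/
def contractVertex {V : Type*} (G : SimpleGraph V) (v : V) : SimpleGraph {u : V // u ≠ v} where
  Adj a b := a ≠ b ∧ ((G.Adj a b) ∨ (G.Adj v a ∧ G.Adj v b))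
  symm := by
    constructor
    rintro a b ⟨hab, h⟩
    exact ⟨hab.symm, h.imp (fun h' => h'.symm) (fun h' => ⟨h'.2, h'.1⟩)⟩
  loopless := ⟨fun a h => h.1 rfl⟩

section Hull
variable {E : Type*} [AddCommGroup E] [Module ℝ E]

lemma hull_le (t : Finset E) (f : E →ₗ[ℝ] ℝ) (M : ℝ) (h : ∀ y ∈ t, f y ≤ M) :
    ∀ x ∈ convexHull ℝ (↑t : Set E), f x ≤ M := by
  intro x hx
  exact convexHull_min (fun y hy => h y (by exact_mod_cast hy))
      (convex_halfSpace_le (LinearMap.isLinear f) M) hx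

lemma hull_eq_of (t : Set E) (f : E →ₗ[ℝ] ℝ) (M : ℝ) (h : ∀ y ∈ t, f y = M) :
    ∀ x ∈ convexHull ℝ t, f x = M := by
  intro x hx
  exact convexHull_min (fun y hy => h y hy) (convex_hyperplane (LinearMap.isLinear f) M) hx

lemma mem_filter_hull (t : Finset E) (f : E →ₗ[ℝ] ℝ) (M : ℝ)
    (hle : ∀ y ∈ t, f y ≤ M) {x : E} (hx : x ∈ convexHull ℝ (↑t : Set E)) (hfx : M ≤ f x) :
    x ∈ convexHull ℝ {y ∈ (↑t : Set E) | f y = M} := by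
  classical
  rw [Finset.convexHull_eq] at hx
  obtain ⟨w, hw0, hw1, hwx⟩ := hx
  have hxsum : x = ∑ y ∈ t, w y • y := by
    rw [← hwx, Finset.centerMass_eq_of_sum_1 _ _ hw1]; rfl
  have hfxsum : f x = ∑ y ∈ t, w y * f y := by
    rw [hxsum, map_sum]; simp [map_smul, smul_eq_mul]
  have hfle : f x ≤ M := by
    calc f x = ∑ y ∈ t, w y * f y := hfxsum
    _ ≤ ∑ y ∈ t, w y * M := Finset.sum_le_sum (fun y hy =>
        mul_le_mul_of_nonneg_left (hle y hy) (hw0 y hy))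
    _ = M := by rw [← Finset.sum_mul, hw1, one_mul]
  have hfxM : f x = M := le_antisymm hfle hfx
  have hzero : ∑ y ∈ t, w y * (M - f y) = 0 := by
    have : ∑ y ∈ t, w y * (M - f y) = M - f x := by
      simp only [mul_sub]
      rw [Finset.sum_sub_distrib, ← Finset.sum_mul, hw1, one_mul, hfxsum]
    rw [this, hfxM, sub_self]
  have hkey : ∀ y ∈ t, w y ≠ 0 → f y = M := by
    intro y hy hwy
    have := (Finset.sum_eq_zero_iff_of_nonneg (fun z hz =>
      mul_nonneg (hw0 z hz) (by linarith [hle z hz]))).1 hzero y hy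
    rcases mul_eq_zero.1 this with h | h
    · exact absurd h hwy
    · linarith
  set t' := t.filter (fun y => f y = M) with ht'
  have hsum' : ∑ y ∈ t', w y = 1 := by
    rw [← hw1]
    apply Finset.sum_subset (Finset.filter_subset _ _)
    intro y hy hny
    by_contra hwy
    exact hny (Finset.mem_filter.2 ⟨hy, hkey y hy hwy⟩)
  have hx' : x = t'.centerMass w id := by
    rw [Finset.centerMass_eq_of_sum_1 _ _ hsum', hxsum]
    apply (Finset.sum_subset (Finset.filter_subset _ _) _).symm
    intro y hy hny
    have : w y = 0 := by
      by_contra hwy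
      exact hny (Finset.mem_filter.2 ⟨hy, hkey y hy hwy⟩)
    simp [this]
  rw [hx']
  apply Finset.centerMass_mem_convexHull
  · exact fun y hy => hw0 y (Finset.filter_subset _ _ hy)
  · rw [hsum']; norm_num
  · intro y hy
    rcases Finset.mem_filter.1 hy with ⟨hyt, hyM⟩
    exact ⟨by exact_mod_cast hyt, hyM⟩


lemma exposed_face_hull (t : Finset E) (ht : t.Nonempty) (f : E →ₗ[ℝ] ℝ) :
    {x ∈ convexHull ℝ (↑t : Set E) | ∀ y ∈ convexHull ℝ (↑t : Set E), f y ≤ f x} =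
      convexHull ℝ {y ∈ (↑t : Set E) | ∀ z ∈ t, f z ≤ f y} := by
  obtain ⟨m, hm, hmax⟩ := Finset.exists_max_image t f ht
  have hset : {y ∈ (↑t : Set E) | ∀ z ∈ t, f z ≤ f y} = {y ∈ (↑t : Set E) | f y = f m} := by
    ext y
    constructor
    · rintro ⟨hyt, hy⟩
      exact ⟨hyt, le_antisymm (hmax y (by exact_mod_cast hyt)) (hy m hm)⟩
    · rintro ⟨hyt, hy⟩
      exact ⟨hyt, fun z hz => by rw [hy]; exact hmax z hz⟩
  rw [hset]
  ext x
  constructor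
  · rintro ⟨hxP, hx⟩
    exact mem_filter_hull t f (f m) (fun y hy => hmax y hy) hxP
      (hx m (subset_convexHull ℝ _ (by exact_mod_cast hm)))
  · intro hx
    have hxP : x ∈ convexHull ℝ (↑t : Set E) :=
      convexHull_mono (fun y hy => hy.1) hx
    have hfx : f x = f m := hull_eq_of _ f (f m) (fun y hy => hy.2) x hx
    refine ⟨hxP, fun y hy => ?_⟩
    rw [hfx]
    exact hull_le t f (f m) (fun z hz => hmax z hz) y hy

end Hull


namespace SEP
set_option linter.unusedSectionVars false

variable {V : Type*} [Fintype V] [DecidableEq V]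

def vert (i j : Option V) : Option V → ℝ :=
  fun k => (if k = i then (1 : ℝ) else 0) - (if k = j then (1 : ℝ) else 0)

def SSet (H : SimpleGraph V) : Set (Option V → ℝ) :=
  {x | ∃ i j, (suspension H).Adj i j ∧ x = vert i j}

lemma symEdge_eq (H : SimpleGraph V) :
    symEdgePolytope (suspension H) = convexHull ℝ (SSet H) := rfl

lemma SSet_finite (H : SimpleGraph V) : (SSet H).Finite := by
  have : SSet H ⊆ (fun p : Option V × Option V => vert p.1 p.2) '' Set.univ := by
    rintro x ⟨i, j, _, rfl⟩
    exact ⟨(i, j), Set.mem_univ _, rfl⟩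
  exact Set.Finite.subset (Set.Finite.image _ (Set.toFinite _)) this

lemma vert_mem {H : SimpleGraph V} {i j : Option V} (h : (suspension H).Adj i j) :
    vert i j ∈ SSet H := ⟨i, j, h, rfl⟩

lemma vert_rev_mem {H : SimpleGraph V} {i j : Option V} (h : (suspension H).Adj i j) :
    vert j i ∈ SSet H := ⟨j, i, h.symm, rfl⟩

def lfun (l : Option V → ℝ) : (Option V → ℝ) →ₗ[ℝ] ℝ where
  toFun x := ∑ k, l k * x k
  map_add' x y := by simp [mul_add, Finset.sum_add_distrib]
  map_smul' c x := by
    simp only [smul_eq_mul, RingHom.id_apply, Pi.smul_apply]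
    rw [Finset.mul_sum]
    exact Finset.sum_congr rfl (fun k _ => by ring)

lemma lfun_apply (l x : Option V → ℝ) : lfun l x = ∑ k, l k * x k := rfl

lemma lfun_vert (l : Option V → ℝ) (i j : Option V) : lfun l (vert i j) = l i - l j := by
  simp only [lfun_apply, vert, mul_sub, Finset.sum_sub_distrib, mul_ite, mul_one, mul_zero]
  rw [Finset.sum_ite_eq' Finset.univ i l, Finset.sum_ite_eq' Finset.univ j l]
  simp

noncomputable def lfunL (l : Option V → ℝ) : (Option V → ℝ) →L[ℝ] ℝ :=
  LinearMap.toContinuousLinearMap (lfun l)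

lemma lfunL_apply (l x : Option V → ℝ) : lfunL l x = lfun l x := rfl

def lOf (f : (Option V → ℝ) →L[ℝ] ℝ) : Option V → ℝ := fun k => f (Pi.single k 1)

lemma vert_eq_single (i j : Option V) : vert i j = Pi.single i 1 - Pi.single j 1 := by
  funext k
  simp [vert, Pi.single_apply]

lemma f_vert (f : (Option V → ℝ) →L[ℝ] ℝ) (i j : Option V) :
    f (vert i j) = lOf f i - lOf f j := by
  rw [vert_eq_single, map_sub]; rfl

lemma lfun_lOf_vert (f : (Option V → ℝ) →L[ℝ] ℝ) (i j : Option V) :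
    lfun (lOf f) (vert i j) = f (vert i j) := by
  rw [f_vert, lfun_vert]

variable {H : SimpleGraph V}

lemma vert_sub_le (i j a b : Option V) : vert i j a - vert i j b ≤ 2 := by
  simp only [vert]
  split_ifs <;> norm_num

lemma vert_apply_le (i j a : Option V) : vert i j a ≤ 1 := by
  simp only [vert]; split_ifs <;> norm_num

lemma vert_apply_le_zero {i j a : Option V} (h : a ≠ i) : vert i j a ≤ 0 := by
  simp only [vert, if_neg h]; split_ifs <;> norm_num

lemma vert_apply_nonneg {i j b : Option V} (h : b ≠ j) : 0 ≤ vert i j b := by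
  simp only [vert, if_neg h]; split_ifs <;> norm_num

lemma vert_sub_eq_two {i j a b : Option V} (h : vert i j a - vert i j b = 2) :
    a = i ∧ b = j := by
  constructor
  · by_contra hai
    have h1 := vert_apply_le_zero (i := i) (j := j) hai
    have h2 : -1 ≤ vert i j b := by simp only [vert]; split_ifs <;> norm_num
    linarith
  · by_contra hbj
    have h1 := vert_apply_nonneg (i := i) (j := j) hbj
    have h2 := vert_apply_le i j a
    linarith

lemma vert_self {i j : Option V} (hij : i ≠ j) : vert i j i = 1 := by
  simp [vert, if_pos rfl, if_neg hij]

lemma vert_self' {i j : Option V} (hij : i ≠ j) : vert i j j = -1 := by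
  simp [vert, if_pos rfl, if_neg (Ne.symm hij)]

lemma mem_of_hull_subset {T : Set (Option V → ℝ)} (hT : T ⊆ SSet H)
    {i j : Option V} (hij : (suspension H).Adj i j)
    (hs : vert i j ∈ convexHull ℝ T) : vert i j ∈ T := by
  classical
  have hTfin : T.Finite := (SSet_finite H).subset hT
  have hcoe : (↑hTfin.toFinset : Set (Option V → ℝ)) = T := hTfin.coe_toFinset
  set t := hTfin.toFinset with ht
  rw [← hcoe] at hs
  set f := lfun (vert i j) with hf
  have hle : ∀ y ∈ t, f y ≤ 2 := by
    intro y hy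
    have hyT : y ∈ T := by rw [← hcoe]; exact_mod_cast hy
    obtain ⟨a, b, hab, rfl⟩ := hT hyT
    rw [hf, lfun_vert]
    exact vert_sub_le i j a b
  have hfx : (2 : ℝ) ≤ f (vert i j) := by
    rw [hf, lfun_vert, vert_self hij.ne, vert_self' hij.ne]
    norm_num
  have hmem := mem_filter_hull t f 2 hle hs hfx
  have hne : {y ∈ (↑t : Set (Option V → ℝ)) | f y = 2}.Nonempty :=
    convexHull_nonempty_iff.1 ⟨_, hmem⟩
  obtain ⟨y, hyt, hy2⟩ := hne
  have hyT : y ∈ T := by rw [← hcoe]; exact_mod_cast hyt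
  obtain ⟨a, b, hab, rfl⟩ := hT hyT
  rw [hf, lfun_vert] at hy2
  obtain ⟨rfl, rfl⟩ := vert_sub_eq_two hy2
  exact hyT

def argmaxSet (H : SimpleGraph V) (l : Option V → ℝ) : Set (Option V → ℝ) :=
  {s ∈ SSet H | ∀ y ∈ SSet H, lfun l y ≤ lfun l s}

lemma argmaxSet_subset (H : SimpleGraph V) (l : Option V → ℝ) : argmaxSet H l ⊆ SSet H :=
  fun _ h => h.1

lemma agree_on_SSet (f : (Option V → ℝ) →L[ℝ] ℝ) :
    ∀ y ∈ SSet H, lfun (lOf f) y = f y := by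
  rintro y ⟨a, b, _, rfl⟩
  exact lfun_lOf_vert f a b

lemma SSet_nonempty [Nonempty V] (H : SimpleGraph V) : (SSet H).Nonempty := by
  obtain ⟨u⟩ := ‹Nonempty V›
  exact ⟨vert none (some u), vert_mem trivial⟩

lemma exposed_iff [Nonempty V] (F : Set (Option V → ℝ)) :
    IsExposed ℝ (convexHull ℝ (SSet H)) F ↔
      F = ∅ ∨ ∃ l : Option V → ℝ, F = convexHull ℝ (argmaxSet H l) := by
  classical
  have hSfin := SSet_finite H
  have hcoe : (↑hSfin.toFinset : Set (Option V → ℝ)) = SSet H := hSfin.coe_toFinset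
  set t := hSfin.toFinset with ht
  have tne : t.Nonempty := by
    obtain ⟨s, hs⟩ := SSet_nonempty H
    exact ⟨s, by rw [← hcoe] at hs; exact_mod_cast hs⟩
  constructor
  · intro hexp
    by_cases hF : F = ∅
    · exact Or.inl hF
    right
    obtain ⟨f, hFeq⟩ := hexp (Set.nonempty_iff_ne_empty.2 hF)
    refine ⟨lOf f, ?_⟩
    rw [hFeq]
    have h1 : convexHull ℝ (SSet H) = convexHull ℝ (↑t : Set (Option V → ℝ)) := by rw [hcoe]
    have hef := exposed_face_hull t tne (f : (Option V → ℝ) →ₗ[ℝ] ℝ)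
    simp only [ContinuousLinearMap.coe_coe] at hef
    rw [h1, hef]
    congr 1
    ext s
    simp only [Set.mem_setOf_eq, hcoe, argmaxSet]
    constructor
    · rintro ⟨hst, hmax⟩
      refine ⟨hst, fun y hy => ?_⟩
      rw [agree_on_SSet f y hy, agree_on_SSet f s hst]
      exact hmax y (by rw [← hcoe] at hy; exact_mod_cast hy)
    · rintro ⟨hst, hmax⟩
      refine ⟨hst, fun z hz => ?_⟩
      have hzS : z ∈ SSet H := by rw [← hcoe]; exact_mod_cast hz
      have := hmax z hzS
      rwa [agree_on_SSet f z hzS, agree_on_SSet f s hst] at this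
  · rintro (rfl | ⟨l, rfl⟩)
    · exact fun h => absurd h (by simp)
    intro _
    refine ⟨lfunL l, ?_⟩
    have h1 : convexHull ℝ (SSet H) = convexHull ℝ (↑t : Set (Option V → ℝ)) := by rw [hcoe]
    have h2 : argmaxSet H l = {y ∈ (↑t : Set (Option V → ℝ)) | ∀ z ∈ t, lfun l z ≤ lfun l y} := by
      ext s
      simp only [argmaxSet, Set.mem_setOf_eq, hcoe]
      constructor
      · rintro ⟨hst, hmax⟩
        exact ⟨hst, fun z hz => hmax z (by rw [← hcoe]; exact_mod_cast hz)⟩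
      · rintro ⟨hst, hmax⟩
        exact ⟨hst, fun y hy => hmax y (by rw [← hcoe] at hy; exact_mod_cast hy)⟩
    rw [h2, ← exposed_face_hull t tne (lfun l), hcoe]
    rfl

def Adm (H : SimpleGraph V) : Set (V → ℝ) :=
  {g | (∀ u, g u = 1 ∨ g u = 0 ∨ g u = -1) ∧
       (∀ i j, H.Adj i j → |g i - g j| ≤ 1) ∧
       (∀ u, g u = 0 → ∃ x, H.Adj u x ∧ g x ≠ 0)}

def lg (g : V → ℝ) : Option V → ℝ := fun o => Option.elim o 0 g

@[simp] lemma lg_none (g : V → ℝ) : lg g none = 0 := rfl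
@[simp] lemma lg_some (g : V → ℝ) (u : V) : lg g (some u) = g u := rfl

lemma adj_some_some {H : SimpleGraph V} {a b : V}
    (h : (suspension H).Adj (some a) (some b)) : H.Adj a b := h

lemma adj_of_some_some {H : SimpleGraph V} {a b : V} (h : H.Adj a b) :
    (suspension H).Adj (some a) (some b) := h

lemma adj_some_none {H : SimpleGraph V} (a : V) : (suspension H).Adj (some a) none := trivial

lemma adj_none_some {H : SimpleGraph V} (a : V) : (suspension H).Adj none (some a) := trivial

lemma not_adj_none_none {H : SimpleGraph V} : ¬ (suspension H).Adj none none :=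
  fun h => h

lemma Adm_le_one {g : V → ℝ} (hg : g ∈ Adm H) :
    ∀ y ∈ SSet H, lfun (lg g) y ≤ 1 := by
  rintro y ⟨i, j, hij, rfl⟩
  rw [lfun_vert]
  match i, j with
  | none, none => exact absurd hij not_adj_none_none
  | none, some b =>
      rcases hg.1 b with h | h | h <;> simp [h]
  | some a, none =>
      rcases hg.1 a with h | h | h <;> simp [h]
  | some a, some b =>
      have := hg.2.1 a b (adj_some_some hij)
      have := abs_le.1 this
      simp only [lg_some]
      linarith [this.1, this.2]

lemma Adm_exists_ne_zero [Nonempty V] {g : V → ℝ} (hg : g ∈ Adm H) :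
    ∃ u, g u ≠ 0 := by
  obtain ⟨u0⟩ := ‹Nonempty V›
  by_cases h : g u0 = 0
  · obtain ⟨x, _, hx⟩ := hg.2.2 u0 h
    exact ⟨x, hx⟩
  · exact ⟨u0, h⟩

lemma Adm_exists_max [Nonempty V] {g : V → ℝ} (hg : g ∈ Adm H) :
    ∃ i j, (suspension H).Adj i j ∧ lg g i - lg g j = 1 := by
  obtain ⟨u, hu⟩ := Adm_exists_ne_zero hg
  rcases hg.1 u with h | h | h
  · exact ⟨some u, none, adj_some_none u, by simp [h]⟩
  · exact absurd h hu
  · exact ⟨none, some u, adj_none_some u, by simp [h]⟩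

lemma mem_argmax_iff [Nonempty V] {g : V → ℝ} (hg : g ∈ Adm H) {i j : Option V}
    (hij : (suspension H).Adj i j) :
    vert i j ∈ argmaxSet H (lg g) ↔ lg g i - lg g j = 1 := by
  obtain ⟨i0, j0, h0, hv0⟩ := Adm_exists_max hg
  constructor
  · rintro ⟨hS, hmax⟩
    have h1 := hmax (vert i0 j0) (vert_mem h0)
    rw [lfun_vert, lfun_vert, hv0] at h1
    have h2 := Adm_le_one hg (vert i j) (vert_mem hij)
    rw [lfun_vert] at h2
    linarith
  · intro hval
    refine ⟨vert_mem hij, fun y hy => ?_⟩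
    rw [lfun_vert, hval]
    exact Adm_le_one hg y hy

lemma argmax_nonempty [Nonempty V] {g : V → ℝ} (hg : g ∈ Adm H) :
    (argmaxSet H (lg g)).Nonempty := by
  obtain ⟨i0, j0, h0, hv0⟩ := Adm_exists_max hg
  exact ⟨vert i0 j0, (mem_argmax_iff hg h0).2 hv0⟩

lemma argmax_ne_SSet [Nonempty V] {g : V → ℝ} (hg : g ∈ Adm H) :
    convexHull ℝ (argmaxSet H (lg g)) ≠ convexHull ℝ (SSet H) := by
  obtain ⟨i0, j0, h0, hv0⟩ := Adm_exists_max hg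
  intro heq
  have hrev : vert j0 i0 ∈ convexHull ℝ (argmaxSet H (lg g)) := by
    rw [heq]
    exact subset_convexHull ℝ _ (vert_rev_mem h0)
  have := mem_of_hull_subset (argmaxSet_subset H (lg g)) h0.symm hrev
  rw [mem_argmax_iff hg h0.symm] at this
  linarith

lemma facet_of_Adm [Nonempty V] {g : V → ℝ} (hg : g ∈ Adm H) :
    IsFacet (convexHull ℝ (SSet H)) (convexHull ℝ (argmaxSet H (lg g))) := by
  refine ⟨(exposed_iff _).2 (Or.inr ⟨lg g, rfl⟩), argmax_ne_SSet hg, ?_⟩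
  intro F' hexp' hne' hsub
  rcases (exposed_iff F').1 hexp' with rfl | ⟨l', rfl⟩
  · obtain ⟨s, hs⟩ := argmax_nonempty hg
    exact absurd (hsub (subset_convexHull ℝ _ hs)) (Set.notMem_empty s)
  · -- F' = convexHull of argmaxSet H l'
    -- Step 1 : argmaxSet H (lg g) ⊆ argmaxSet H l'
    have hstep1 : argmaxSet H (lg g) ⊆ argmaxSet H l' := by
      intro s hs
      obtain ⟨i, j, hij, rfl⟩ := hs.1
      exact mem_of_hull_subset (argmaxSet_subset H l') hij
        (hsub (subset_convexHull ℝ _ hs))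
    obtain ⟨i0, j0, h0, hv0⟩ := Adm_exists_max hg
    have h0T : vert i0 j0 ∈ argmaxSet H l' := hstep1 ((mem_argmax_iff hg h0).2 hv0)
    set M' := lfun l' (vert i0 j0) with hM'
    have hmaxM' : ∀ y ∈ SSet H, lfun l' y ≤ M' := h0T.2
    have hvalT' : ∀ s ∈ argmaxSet H l', lfun l' s = M' := fun s hs =>
      le_antisymm (hmaxM' s hs.1) (hs.2 _ (vert_mem h0))
    -- Step 3 : M' > 0
    have hM'pos : 0 < M' := by
      have hTne : argmaxSet H l' ≠ SSet H := by
        intro h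
        exact hne' (by rw [h])
      obtain ⟨s0, hs0S, hs0⟩ : ∃ s0 ∈ SSet H, s0 ∉ argmaxSet H l' := by
        by_contra hc
        push_neg at hc
        exact hTne (Set.Subset.antisymm (argmaxSet_subset H l') hc)
      obtain ⟨a, b, hab, rfl⟩ := hs0S
      have hlt : lfun l' (vert a b) < M' := by
        have hna : ¬ ∀ y ∈ SSet H, lfun l' y ≤ lfun l' (vert a b) :=
          fun h => hs0 ⟨⟨a, b, hab, rfl⟩, h⟩
        push_neg at hna
        obtain ⟨y, hyS, hy⟩ := hna
        exact lt_of_lt_of_le hy (hmaxM' y hyS)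
      have hge : -M' ≤ lfun l' (vert a b) := by
        have := hmaxM' (vert b a) (vert_rev_mem hab)
        rw [lfun_vert] at this ⊢
        linarith
      linarith
    -- Step 4 : l' x - l' none = M' * lg g x for all x
    have hsome : ∀ u : V, g u ≠ 0 → l' (some u) - l' none = M' * g u := by
      intro u hu
      rcases hg.1 u with h | h | h
      · have h1 := hvalT' _ (hstep1 ((mem_argmax_iff hg (adj_some_none u)).2 (by simp [h])))
        rw [lfun_vert] at h1
        rw [h, mul_one]
        exact h1
      · exact absurd h hu
      · have h1 := hvalT' _ (hstep1 ((mem_argmax_iff hg (adj_none_some u)).2 (by simp [h])))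
        rw [lfun_vert] at h1
        rw [h]
        linarith
    have hall : ∀ x : Option V, l' x - l' none = M' * lg g x := by
      intro x
      match x with
      | none => simp
      | some u =>
        by_cases hu : g u = 0
        · obtain ⟨x0, hx0adj, hx0⟩ := hg.2.2 u hu
          rcases hg.1 x0 with h | h | h
          · have h1 := hvalT' _ (hstep1 ((mem_argmax_iff hg
              (adj_of_some_some hx0adj.symm)).2 (by simp [h, hu])))
            rw [lfun_vert] at h1
            have h2 := hsome x0 (by rw [h]; norm_num)
            rw [h, mul_one] at h2
            simp only [lg_some, hu, mul_zero]
            linarith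
          · exact absurd h hx0
          · have h1 := hvalT' _ (hstep1 ((mem_argmax_iff hg
              (adj_of_some_some hx0adj)).2 (by simp [h, hu])))
            rw [lfun_vert] at h1
            have h2 := hsome x0 (by rw [h]; norm_num)
            rw [h] at h2
            simp only [lg_some, hu, mul_zero]
            linarith
        · rw [lg_some]; exact hsome u hu
    -- Step 5 : argmaxSet H l' ⊆ argmaxSet H (lg g)
    have hstep5 : argmaxSet H l' ⊆ argmaxSet H (lg g) := by
      intro s hs
      obtain ⟨a, b, hab, rfl⟩ := hs.1
      have h1 := hvalT' _ hs
      rw [lfun_vert] at h1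
      have h2 : M' * (lg g a - lg g b) = M' * 1 := by
        rw [mul_sub, ← hall a, ← hall b, mul_one]
        linarith
      have h3 : lg g a - lg g b = 1 := mul_left_cancel₀ (ne_of_gt hM'pos) h2
      exact (mem_argmax_iff hg hab).2 h3
    rw [Set.Subset.antisymm hstep5 hstep1]

lemma hull_argmax_ne {l : Option V → ℝ} {i j : Option V} (hij : (suspension H).Adj i j)
    (hmem : vert i j ∈ argmaxSet H l) (hpos : 0 < lfun l (vert i j)) :
    convexHull ℝ (argmaxSet H l) ≠ convexHull ℝ (SSet H) := by
  intro heq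
  have hrev : vert j i ∈ convexHull ℝ (argmaxSet H l) := by
    rw [heq]
    exact subset_convexHull ℝ _ (vert_rev_mem hij)
  have hrevmem := mem_of_hull_subset (argmaxSet_subset H l) hij.symm hrev
  have h1 := hrevmem.2 (vert i j) (vert_mem hij)
  have h2 : lfun l (vert j i) = - lfun l (vert i j) := by
    rw [lfun_vert, lfun_vert]; ring
  rw [h2] at h1
  linarith

lemma facet_eq [Nonempty V] {F : Set (Option V → ℝ)}
    (hF : IsFacet (convexHull ℝ (SSet H)) F) :
    ∃ g ∈ Adm H, F = convexHull ℝ (argmaxSet H (lg g)) := by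
  classical
  obtain ⟨hexp, hneP, hmaxl⟩ := hF
  -- the constant function 1 is admissible
  have hg1 : (fun _ : V => (1 : ℝ)) ∈ Adm H :=
    ⟨fun _ => Or.inl rfl, fun i j _ => by norm_num, fun u h => by norm_num at h⟩
  -- F is nonempty
  have hFne : F ≠ ∅ := by
    rintro rfl
    have h1 := hmaxl (convexHull ℝ (argmaxSet H (lg (fun _ => 1))))
      ((exposed_iff _).2 (Or.inr ⟨_, rfl⟩)) (argmax_ne_SSet hg1) (Set.empty_subset _)
    obtain ⟨s, hs⟩ := argmax_nonempty hg1
    exact Set.notMem_empty s (h1 ▸ subset_convexHull ℝ _ hs)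
  rcases (exposed_iff F).1 hexp with rfl | ⟨l', rfl⟩
  · exact absurd rfl hFne
  -- now F = convexHull of T' := argmaxSet H l'
  have hT'ne : (argmaxSet H l').Nonempty := by
    by_contra hc
    rw [Set.not_nonempty_iff_eq_empty] at hc
    exact hFne (by rw [hc, convexHull_empty])
  obtain ⟨s0, hs0⟩ := hT'ne
  set M' := lfun l' s0 with hM'def
  have hmaxM' : ∀ y ∈ SSet H, lfun l' y ≤ M' := hs0.2
  have hvalT' : ∀ s ∈ argmaxSet H l', lfun l' s = M' := fun s hs =>
    le_antisymm (hmaxM' s hs.1) (hs.2 _ hs0.1)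
  have hT'neS : argmaxSet H l' ≠ SSet H := by
    intro h
    exact hneP (by rw [h])
  -- M' > 0
  have hM'pos : 0 < M' := by
    obtain ⟨s1, hs1S, hs1⟩ : ∃ s1 ∈ SSet H, s1 ∉ argmaxSet H l' := by
      by_contra hc
      push_neg at hc
      exact hT'neS (Set.Subset.antisymm (argmaxSet_subset H l') hc)
    obtain ⟨a, b, hab, rfl⟩ := hs1S
    have hlt : lfun l' (vert a b) < M' := by
      have hna : ¬ ∀ y ∈ SSet H, lfun l' y ≤ lfun l' (vert a b) :=
        fun h => hs1 ⟨⟨a, b, hab, rfl⟩, h⟩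
      push_neg at hna
      obtain ⟨y, hyS, hy⟩ := hna
      exact lt_of_lt_of_le hy (hmaxM' y hyS)
    have hge : -M' ≤ lfun l' (vert a b) := by
      have := hmaxM' (vert b a) (vert_rev_mem hab)
      rw [lfun_vert] at this ⊢
      linarith
    linarith
  -- the tight graph
  set TG : SimpleGraph (Option V) :=
    SimpleGraph.fromRel (fun x y => (suspension H).Adj x y ∧ l' x - l' y = M') with hTG
  have walk_lemma : ∀ {x y : Option V}, TG.Walk x y → ∃ k : ℤ, l' y = l' x + k * M' := by
    intro x y p
    induction p with
    | nil => exact ⟨0, by simp⟩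
    | cons h p ih =>
        obtain ⟨k, hk⟩ := ih
        rcases (SimpleGraph.fromRel_adj _ _ _).1 h with ⟨hne, ⟨_, hd⟩ | ⟨_, hd⟩⟩
        · exact ⟨k - 1, by push_cast; linarith⟩
        · exact ⟨k + 1, by push_cast; linarith⟩
  have tg_adj : ∀ {x y : Option V}, TG.Adj x y →
      (suspension H).Adj x y ∧ (l' x - l' y = M' ∨ l' y - l' x = M') := by
    intro x y h
    rcases (SimpleGraph.fromRel_adj _ _ _).1 h with ⟨hne, ⟨ha, hd⟩ | ⟨ha, hd⟩⟩
    · exact ⟨ha, Or.inl hd⟩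
    · exact ⟨ha.symm, Or.inr hd⟩
  by_cases hconn : ∀ x : Option V, TG.Reachable none x
  · -- connected case: extract g
    have hbound : ∀ u : V, |l' (some u) - l' none| ≤ M' := by
      intro u
      have h1 := hmaxM' (vert (some u) none) (vert_mem (adj_some_none u))
      have h2 := hmaxM' (vert none (some u)) (vert_mem (adj_none_some u))
      rw [lfun_vert] at h1 h2
      rw [abs_le]
      constructor <;> linarith
    have hval3 : ∀ x : Option V, l' x - l' none = M' ∨ l' x - l' none = 0 ∨
        l' x - l' none = -M' := by
      intro x
      obtain ⟨p⟩ := hconn x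
      obtain ⟨k, hk⟩ := walk_lemma p
      match x with
      | none => exact Or.inr (Or.inl (by ring))
      | some u =>
        have hb := hbound u
        rw [hk] at hb ⊢
        have habs : |(k : ℝ) * M'| ≤ M' := by
          have heq : (k : ℝ) * M' = l' none + k * M' - l' none := by ring
          rw [heq]; exact hb
        rw [abs_mul, abs_of_pos hM'pos] at habs
        have hk1 : |(k : ℝ)| ≤ 1 :=
          le_of_mul_le_mul_right (by rw [one_mul]; exact habs) hM'pos
        have hk1' : |k| ≤ 1 := by exact_mod_cast (by rwa [← Int.cast_abs] at hk1 : ((|k| : ℤ) : ℝ) ≤ 1)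
        obtain ⟨hlb, hub⟩ := abs_le.mp hk1'
        interval_cases k
        · right; right; push_cast; ring
        · right; left; push_cast; ring
        · left; push_cast; ring
    set g : V → ℝ := fun u => (l' (some u) - l' none) / M' with hgdef
    have hM'ne : M' ≠ 0 := ne_of_gt hM'pos
    have hid : ∀ x : Option V, l' x - l' none = M' * lg g x := by
      intro x
      match x with
      | none => simp
      | some u =>
        show l' (some u) - l' none = M' * ((l' (some u) - l' none) / M')
        field_simp
    have hgval : ∀ u, g u = 1 ∨ g u = 0 ∨ g u = -1 := by
      intro u
      rcases hval3 (some u) with h | h | h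
      · left
        show (l' (some u) - l' none) / M' = 1
        rw [h]; exact div_self hM'ne
      · right; left
        show (l' (some u) - l' none) / M' = 0
        rw [h, zero_div]
      · right; right
        show (l' (some u) - l' none) / M' = -1
        rw [h, neg_div, div_self hM'ne]
    have hgedge : ∀ i j, H.Adj i j → |g i - g j| ≤ 1 := by
      intro i j hij
      have h1 := hmaxM' (vert (some i) (some j)) (vert_mem (adj_of_some_some hij))
      have h2 := hmaxM' (vert (some j) (some i)) (vert_mem (adj_of_some_some hij.symm))
      rw [lfun_vert] at h1 h2
      have hgij : g i - g j = (l' (some i) - l' (some j)) / M' := by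
        show (l' (some i) - l' none) / M' - (l' (some j) - l' none) / M' = _
        field_simp
        ring
      rw [hgij, abs_div, abs_of_pos hM'pos, div_le_one hM'pos, abs_le]
      constructor <;> linarith
    have hgzero : ∀ u, g u = 0 → ∃ x, H.Adj u x ∧ g x ≠ 0 := by
      intro u hu
      have hlu : l' (some u) = l' none := by
        have := hid (some u)
        rw [lg_some, hu, mul_zero] at this
        linarith
      have hreach := hconn (some u)
      have hadj : ∃ z, TG.Adj (some u) z := by
        obtain ⟨p⟩ := hreach.symm
        cases p with
        | cons h _ => exact ⟨_, h⟩
      obtain ⟨z, hz⟩ := hadj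
      obtain ⟨hzadj, hzd⟩ := tg_adj hz
      match z with
      | none =>
          exfalso
          rw [hlu] at hzd
          rcases hzd with h | h <;> simp at h <;> linarith
      | some x =>
          refine ⟨x, adj_some_some hzadj, ?_⟩
          intro hx
          have hlx : l' (some x) = l' none := by
            have := hid (some x)
            rw [lg_some, hx, mul_zero] at this
            linarith
          rw [hlu, hlx] at hzd
          rcases hzd with h | h <;> simp at h <;> linarith
    have hgAdm : g ∈ Adm H := ⟨hgval, hgedge, hgzero⟩
    refine ⟨g, hgAdm, ?_⟩
    congr 1
    ext s
    constructor
    · intro hs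
      obtain ⟨a, b, hab, rfl⟩ := hs.1
      have h1 := hvalT' _ hs
      rw [lfun_vert] at h1
      have h2 : M' * (lg g a - lg g b) = M' * 1 := by
        rw [mul_sub, ← hid a, ← hid b, mul_one]
        linarith
      exact (mem_argmax_iff hgAdm hab).2 (mul_left_cancel₀ (ne_of_gt hM'pos) h2)
    · intro hs
      obtain ⟨a, b, hab, rfl⟩ := hs.1
      have h1 := (mem_argmax_iff hgAdm hab).1 hs
      refine ⟨⟨a, b, hab, rfl⟩, fun y hy => ?_⟩
      have h2 : l' a - l' b = M' := by
        have ha := hid a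
        have hb := hid b
        have : l' a - l' b = M' * (lg g a - lg g b) := by rw [mul_sub, ← ha, ← hb]; ring
        rw [this, h1, mul_one]
      rw [lfun_vert, h2]
      exact hmaxM' y hy
  · -- disconnected case: contradiction with maximality
    exfalso
    push_neg at hconn
    obtain ⟨x0, hx0⟩ := hconn
    set A : Set (Option V) := {x | TG.Reachable none x} with hA
    have hnoneA : none ∈ A := SimpleGraph.Reachable.refl none
    have hx0A : x0 ∉ A := hx0
    obtain ⟨u0, rfl⟩ : ∃ u, x0 = some u := by
      match x0 with
      | none => exact absurd hnoneA hx0A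
      | some u => exact ⟨u, rfl⟩
    set cross : Finset (Option V × Option V) :=
      Finset.univ.filter (fun p => (suspension H).Adj p.1 p.2 ∧ p.1 ∈ A ∧ p.2 ∉ A) with hcross
    have hcross_mem : ∀ p : Option V × Option V, p ∈ cross ↔
        (suspension H).Adj p.1 p.2 ∧ p.1 ∈ A ∧ p.2 ∉ A := by
      intro p
      simp [hcross]
    have hcrossne : cross.Nonempty :=
      ⟨(none, some u0), (hcross_mem _).2 ⟨adj_none_some u0, hnoneA, hx0A⟩⟩
    set tstar := cross.inf' hcrossne (fun p => M' - (l' p.2 - l' p.1)) with htstar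
    have hcross_lt : ∀ p ∈ cross, l' p.2 - l' p.1 < M' := by
      intro p hp
      obtain ⟨hadj, h1A, h2A⟩ := (hcross_mem p).1 hp
      have hle := hmaxM' (vert p.2 p.1) (vert_rev_mem hadj)
      rw [lfun_vert] at hle
      rcases lt_or_eq_of_le hle with h | h
      · exact h
      · exfalso
        have htadj : TG.Adj p.1 p.2 :=
          (SimpleGraph.fromRel_adj _ _ _).2 ⟨hadj.ne, Or.inr ⟨hadj.symm, h⟩⟩
        exact h2A (h1A.trans htadj.reachable)
    have htpos : 0 < tstar := by
      rw [htstar, Finset.lt_inf'_iff]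
      intro p hp
      have := hcross_lt p hp
      linarith
    set l'' : Option V → ℝ := fun x => l' x + (if x ∈ A then 0 else tstar) with hl''
    have hsameside : ∀ {x y : Option V}, TG.Adj x y → (x ∈ A ↔ y ∈ A) := by
      intro x y h
      constructor
      · intro hx
        exact hx.trans h.reachable
      · intro hy
        exact hy.trans h.symm.reachable
    have hle'' : ∀ y ∈ SSet H, lfun l'' y ≤ M' := by
      rintro y ⟨a, b, hab, rfl⟩
      rw [lfun_vert]
      have hab' := hmaxM' (vert a b) (vert_mem hab)
      rw [lfun_vert] at hab'
      by_cases ha : a ∈ A <;> by_cases hb : b ∈ A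
      · simp only [hl'', if_pos ha, if_pos hb]; linarith
      · simp only [hl'', if_pos ha, if_neg hb]; linarith
      · simp only [hl'', if_neg ha, if_pos hb]
        have hmem : (b, a) ∈ cross := (hcross_mem _).2 ⟨hab.symm, hb, ha⟩
        have := Finset.inf'_le (fun p => M' - (l' p.2 - l' p.1)) hmem
        rw [← htstar] at this
        simp only at this
        linarith
      · simp only [hl'', if_neg ha, if_neg hb]; linarith
    have hsub'' : argmaxSet H l' ⊆ argmaxSet H l'' := by
      intro s hs
      obtain ⟨a, b, hab, rfl⟩ := hs.1
      have h1 := hvalT' _ hs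
      rw [lfun_vert] at h1
      have htadj : TG.Adj a b :=
        (SimpleGraph.fromRel_adj _ _ _).2 ⟨hab.ne, Or.inl ⟨hab, h1⟩⟩
      have hside := hsameside htadj
      have h2 : l'' a - l'' b = M' := by
        by_cases ha : a ∈ A
        · simp only [hl'', if_pos ha, if_pos (hside.1 ha)]; linarith
        · have hb : b ∉ A := fun hb => ha (hside.2 hb)
          simp only [hl'', if_neg ha, if_neg hb]; linarith
      refine ⟨⟨a, b, hab, rfl⟩, fun y hy => ?_⟩
      rw [lfun_vert, h2]
      exact hle'' y hy
    obtain ⟨pstar, hpstar, hpval⟩ := Finset.exists_mem_eq_inf' hcrossne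
      (fun p => M' - (l' p.2 - l' p.1))
    obtain ⟨hpadj, hp1A, hp2A⟩ := (hcross_mem pstar).1 hpstar
    have hnew : vert pstar.2 pstar.1 ∈ argmaxSet H l'' := by
      refine ⟨vert_rev_mem hpadj, fun y hy => ?_⟩
      have h2 : l'' pstar.2 - l'' pstar.1 = M' := by
        simp only [hl'', if_pos hp1A, if_neg hp2A]
        rw [← htstar] at hpval
        rw [hpval]
        ring
      rw [lfun_vert, h2]
      exact hle'' y hy
    have hnewnotin : vert pstar.2 pstar.1 ∉ argmaxSet H l' := by
      intro hmem
      have := hvalT' _ hmem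
      rw [lfun_vert] at this
      have := hcross_lt pstar hpstar
      linarith
    -- apply maximality
    have hvalnew : lfun l'' (vert pstar.2 pstar.1) = M' := by
      rw [lfun_vert]
      simp only [hl'', if_pos hp1A, if_neg hp2A]
      rw [← htstar] at hpval
      rw [hpval]
      ring
    have hF''ne : convexHull ℝ (argmaxSet H l'') ≠ convexHull ℝ (SSet H) := by
      apply hull_argmax_ne hpadj.symm hnew
      rw [hvalnew]
      exact hM'pos
    have hmaxres := hmaxl (convexHull ℝ (argmaxSet H l''))
      ((exposed_iff _).2 (Or.inr ⟨l'', rfl⟩)) hF''ne (convexHull_mono hsub'')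
    have : vert pstar.2 pstar.1 ∈ convexHull ℝ (argmaxSet H l') := by
      rw [← hmaxres]
      exact subset_convexHull ℝ _ hnew
    exact hnewnotin (mem_of_hull_subset (argmaxSet_subset H l') hpadj.symm this)

lemma mem_argmax_one [Nonempty V] {g : V → ℝ} (hg : g ∈ Adm H) (u : V) :
    vert (some u) none ∈ argmaxSet H (lg g) ↔ g u = 1 := by
  rw [mem_argmax_iff hg (adj_some_none u)]
  simp

lemma mem_argmax_negone [Nonempty V] {g : V → ℝ} (hg : g ∈ Adm H) (u : V) :
    vert none (some u) ∈ argmaxSet H (lg g) ↔ g u = -1 := by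
  rw [mem_argmax_iff hg (adj_none_some u)]
  constructor <;> intro h <;> simp at h ⊢ <;> linarith

lemma numFacets_suspension [Nonempty V] (H : SimpleGraph V) :
    numFacets (symEdgePolytope (suspension H)) = (Adm H).ncard := by
  have hset : {F | IsFacet (convexHull ℝ (SSet H)) F} =
      (fun g => convexHull ℝ (argmaxSet H (lg g))) '' Adm H := by
    ext F
    constructor
    · intro hF
      obtain ⟨g, hg, rfl⟩ := facet_eq hF
      exact ⟨g, hg, rfl⟩
    · rintro ⟨g, hg, rfl⟩
      exact facet_of_Adm hg
  rw [symEdge_eq] at *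
  rw [numFacets, hset]
  apply Set.ncard_image_of_injOn
  intro g1 hg1 g2 hg2 heq
  simp only at heq
  have hsets : argmaxSet H (lg g1) = argmaxSet H (lg g2) := by
    apply Set.Subset.antisymm
    · intro s hs
      obtain ⟨a, b, hab, rfl⟩ := hs.1
      exact mem_of_hull_subset (argmaxSet_subset H (lg g2)) hab
        (heq ▸ subset_convexHull ℝ _ hs)
    · intro s hs
      obtain ⟨a, b, hab, rfl⟩ := hs.1
      exact mem_of_hull_subset (argmaxSet_subset H (lg g1)) hab
        (heq.symm ▸ subset_convexHull ℝ _ hs)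
  have key1 : ∀ u, g1 u = 1 ↔ g2 u = 1 := by
    intro u
    rw [← mem_argmax_one hg1 u, ← mem_argmax_one hg2 u, hsets]
  have keym : ∀ u, g1 u = -1 ↔ g2 u = -1 := by
    intro u
    rw [← mem_argmax_negone hg1 u, ← mem_argmax_negone hg2 u, hsets]
  funext u
  have k1 := key1 u
  have km := keym u
  rcases hg1.1 u with h1 | h1 | h1 <;> rcases hg2.1 u with h2 | h2 | h2 <;>
    rw [h1, h2] <;> rw [h1, h2] at k1 km <;> revert k1 km <;> norm_num

lemma Adm_finite (H : SimpleGraph V) : (Adm H).Finite := by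
  apply Set.Finite.subset (Set.Finite.pi (t := fun _ : V => ({1, 0, -1} : Set ℝ))
    (fun _ => ((Set.finite_singleton (-1 : ℝ)).insert 0).insert 1))
  intro g hg
  rw [Set.mem_pi]
  intro u _
  rcases hg.1 u with h | h | h <;> simp [h]

end SEP


section Comb

open SEP

variable {V : Type*} [Fintype V] [DecidableEq V]

theorem Adm_count (G : SimpleGraph V) (hcard : 2 ≤ Fintype.card V) (v : V)
    (hNv : ∀ u : V, u = v ∨ G.Adj v u) :
    (Adm G).ncard =
      (Adm (G.induce {u : V | u ≠ v})).ncard + (Adm (contractVertex G v)).ncard + 2 := by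
  classical
  obtain ⟨w0, hw0⟩ := Fintype.exists_ne_of_one_lt_card (by omega) v
  haveI hne1 : Nonempty ↥{u : V | u ≠ v} := ⟨⟨w0, hw0⟩⟩
  haveI hne2 : Nonempty {u : V // u ≠ v} := ⟨⟨w0, hw0⟩⟩
  have hadjv : ∀ u : V, u ≠ v → G.Adj v u := fun u hu => (hNv u).resolve_left hu
  set K := contractVertex G v with hK
  have hKadj : ∀ a b : {u : V // u ≠ v}, a ≠ b → K.Adj a b := by
    intro a b hab
    exact (show a ≠ b ∧ _ from ⟨hab, Or.inr ⟨hadjv _ a.2, hadjv _ b.2⟩⟩)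
  -- the three pieces
  set S0 := {g ∈ Adm G | g v = 0} with hS0
  set S1 := {g ∈ Adm G | g v = 1} with hS1
  set Sm := {g ∈ Adm G | g v = -1} with hSm
  -- restriction map
  set res : (V → ℝ) → (↥{u : V | u ≠ v} → ℝ) := fun g u => g ↑u with hres
  set res' : (V → ℝ) → ({u : V // u ≠ v} → ℝ) := fun g u => g ↑u with hres'
  -- characterization of S1 and Sm
  have hS1char : S1 = {g | g v = 1 ∧ ∀ u, g u = 0 ∨ g u = 1} := by
    ext g
    constructor
    · rintro ⟨hg, hgv⟩
      refine ⟨hgv, fun u => ?_⟩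
      by_cases hu : u = v
      · right; rw [hu]; exact hgv
      rcases hg.1 u with h | h | h
      · right; exact h
      · left; exact h
      · exfalso
        have := hg.2.1 v u (hadjv u hu)
        rw [hgv, h] at this
        rw [abs_le] at this
        linarith [this.2]
    · rintro ⟨hgv, hval⟩
      refine ⟨⟨fun u => ?_, fun i j _ => ?_, fun u hu => ?_⟩, hgv⟩
      · rcases hval u with h | h
        · right; left; exact h
        · left; exact h
      · rcases hval i with h | h <;> rcases hval j with h' | h' <;>
          rw [h, h'] <;> norm_num
      · have huv : u ≠ v := by
          intro h
          rw [h, hgv] at hu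
          norm_num at hu
        exact ⟨v, (hadjv u huv).symm, by rw [hgv]; norm_num⟩
  have hSmchar : Sm = {g | g v = -1 ∧ ∀ u, g u = 0 ∨ g u = -1} := by
    ext g
    constructor
    · rintro ⟨hg, hgv⟩
      refine ⟨hgv, fun u => ?_⟩
      by_cases hu : u = v
      · right; rw [hu]; exact hgv
      rcases hg.1 u with h | h | h
      · exfalso
        have := hg.2.1 v u (hadjv u hu)
        rw [hgv, h] at this
        rw [abs_le] at this
        linarith [this.1]
      · left; exact h
      · right; exact h
    · rintro ⟨hgv, hval⟩
      refine ⟨⟨fun u => ?_, fun i j _ => ?_, fun u hu => ?_⟩, hgv⟩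
      · rcases hval u with h | h
        · right; left; exact h
        · right; right; exact h
      · rcases hval i with h | h <;> rcases hval j with h' | h' <;>
          rw [h, h'] <;> norm_num
      · have huv : u ≠ v := by
          intro h
          rw [h, hgv] at hu
          norm_num at hu
        exact ⟨v, (hadjv u huv).symm, by rw [hgv]; norm_num⟩
  -- Part A : S0 ↔ Adm (induce)
  have hresInj0 : Set.InjOn res S0 := by
    intro g1 hg1 g2 hg2 h
    funext u
    by_cases hu : u = v
    · rw [hu, hg1.2, hg2.2]
    · exact congrFun h ⟨u, hu⟩
  have himage0 : res '' S0 = Adm (G.induce {u : V | u ≠ v}) := by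
    ext g'
    constructor
    · rintro ⟨g, ⟨hg, hgv⟩, rfl⟩
      refine ⟨fun u => hg.1 ↑u, fun a b hab => ?_, fun a ha => ?_⟩
      · exact hg.2.1 ↑a ↑b (SimpleGraph.comap_adj.1 hab)
      · obtain ⟨x, hx, hxne⟩ := hg.2.2 ↑a ha
        have hxv : x ≠ v := by
          intro h
          rw [h, hgv] at hxne
          exact hxne rfl
        exact ⟨⟨x, hxv⟩, SimpleGraph.comap_adj.2 hx, hxne⟩
    · intro hg'
      have hex : ∃ a : ↥{u : V | u ≠ v}, g' a ≠ 0 := by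
        by_cases h : g' ⟨w0, hw0⟩ = 0
        · obtain ⟨x, _, hx⟩ := hg'.2.2 _ h
          exact ⟨x, hx⟩
        · exact ⟨_, h⟩
      refine ⟨fun u => if h : u = v then 0 else g' ⟨u, h⟩, ⟨⟨?_, ?_, ?_⟩, by simp⟩, ?_⟩
      · intro u
        by_cases h : u = v
        · right; left; simp [h]
        · simp only [dif_neg h]; exact hg'.1 ⟨u, h⟩
      · intro i j hij
        by_cases hi : i = v <;> by_cases hj : j = v
        · exact absurd (hi.trans hj.symm) hij.ne
        · simp only [dif_pos hi, dif_neg hj]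
          rcases hg'.1 ⟨j, hj⟩ with h | h | h <;> rw [h] <;> norm_num
        · simp only [dif_pos hj, dif_neg hi]
          rcases hg'.1 ⟨i, hi⟩ with h | h | h <;> rw [h] <;> norm_num
        · simp only [dif_neg hi, dif_neg hj]
          exact hg'.2.1 ⟨i, hi⟩ ⟨j, hj⟩ (SimpleGraph.comap_adj.2 hij)
      · intro u hu
        by_cases h : u = v
        · obtain ⟨a, ha⟩ := hex
          refine ⟨↑a, h ▸ hadjv ↑a a.2, ?_⟩
          simpa [dif_neg (show (a : V) ≠ v from a.2)] using ha
        · simp only [dif_neg h] at hu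
          obtain ⟨x, hx, hxne⟩ := hg'.2.2 ⟨u, h⟩ hu
          refine ⟨↑x, SimpleGraph.comap_adj.1 hx, ?_⟩
          simpa [dif_neg (show (x : V) ≠ v from x.2)] using hxne
      · funext u
        simp only [hres, dif_neg (show (u : V) ≠ v from u.2)]
  -- Part B : constants and the classes S1, Sm
  set c1 : V → ℝ := fun u => if u = v then 1 else 0 with hc1
  set cm : V → ℝ := fun u => if u = v then -1 else 0 with hcm
  have hc1S1 : c1 ∈ S1 := by
    rw [hS1char]
    refine ⟨by simp [hc1], fun u => ?_⟩
    by_cases h : u = v <;> simp [hc1, h]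
  have hcmSm : cm ∈ Sm := by
    rw [hSmchar]
    refine ⟨by simp [hcm], fun u => ?_⟩
    by_cases h : u = v <;> simp [hcm, h]
  set P1 := {g' ∈ Adm K | ∀ u, g' u = 0 ∨ g' u = 1} with hP1
  set Pm := {g' ∈ Adm K | ∀ u, g' u = 0 ∨ g' u = -1} with hPm
  have hKsplit : Adm K = P1 ∪ Pm := by
    ext g'
    constructor
    · intro hg'
      by_cases hm : ∃ a, g' a = -1
      · right
        refine ⟨hg', fun u => ?_⟩
        rcases hg'.1 u with h | h | h
        · exfalso
          obtain ⟨a, ha⟩ := hm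
          have hau : a ≠ u := by intro e; rw [e, h] at ha; norm_num at ha
          have habs := hg'.2.1 a u (hKadj a u hau)
          rw [ha, h, abs_le] at habs
          linarith [habs.1]
        · left; exact h
        · right; exact h
      · left
        refine ⟨hg', fun u => ?_⟩
        rcases hg'.1 u with h | h | h
        · right; exact h
        · left; exact h
        · exact absurd ⟨u, h⟩ hm
    · rintro (h | h) <;> exact h.1
  have hexg : ∀ g' : {u : V // u ≠ v} → ℝ, g' ∈ Adm K → ∃ a, g' a ≠ 0 := by
    intro g' hg'
    obtain ⟨u0⟩ := hne2
    by_cases h : g' u0 = 0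
    · obtain ⟨x, _, hx⟩ := hg'.2.2 u0 h
      exact ⟨x, hx⟩
    · exact ⟨u0, h⟩
  have hKdisj : Disjoint P1 Pm := by
    rw [Set.disjoint_left]
    rintro g' ⟨hg', h1⟩ ⟨_, hm⟩
    have hz : ∀ u, g' u = 0 := by
      intro u
      rcases h1 u with h | h
      · exact h
      · rcases hm u with h' | h'
        · exact h'
        · rw [h] at h'; norm_num at h'
    obtain ⟨a, ha⟩ := hexg g' hg'
    exact ha (hz a)
  have hresInj1 : Set.InjOn res' (S1 \ {c1}) := by
    intro g1 hg1 g2 hg2 h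
    funext u
    by_cases hu : u = v
    · rw [hu, hg1.1.2, hg2.1.2]
    · exact congrFun h ⟨u, hu⟩
  have hresInjm : Set.InjOn res' (Sm \ {cm}) := by
    intro g1 hg1 g2 hg2 h
    funext u
    by_cases hu : u = v
    · rw [hu, hg1.1.2, hg2.1.2]
    · exact congrFun h ⟨u, hu⟩
  have himage1 : res' '' (S1 \ {c1}) = P1 := by
    ext g'
    constructor
    · rintro ⟨g, ⟨hgS1, hgne⟩, rfl⟩
      have hgchar := hS1char ▸ hgS1
      have hval : ∀ a : {u : V // u ≠ v}, g ↑a = 0 ∨ g ↑a = 1 := fun a => hgchar.2 ↑a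
      have hexoff : ∃ a : {u : V // u ≠ v}, g ↑a ≠ 0 := by
        by_contra hc
        push_neg at hc
        apply hgne
        show g = c1
        funext u
        by_cases h : u = v
        · rw [h, hgchar.1, hc1]; simp
        · rw [hc1]
          simp only [if_neg h]
          exact hc ⟨u, h⟩
      refine ⟨⟨fun a => ?_, fun a b hab => ?_, fun a ha => ?_⟩, fun a => hval a⟩
      · rcases hval a with h | h
        · right; left; exact h
        · left; exact h
      · show |g ↑a - g ↑b| ≤ 1
        rcases hval a with h | h <;> rcases hval b with h' | h' <;> rw [h, h'] <;> norm_num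
      · obtain ⟨a0, ha0⟩ := hexoff
        have hane : a ≠ a0 := fun e => ha0 (e ▸ ha)
        exact ⟨a0, hKadj a a0 hane, ha0⟩
    · intro hg'
      obtain ⟨a0, ha0⟩ := hexg g' hg'.1
      refine ⟨fun u => if h : u = v then 1 else g' ⟨u, h⟩, ⟨?_, ?_⟩, ?_⟩
      · rw [hS1char]
        refine ⟨by simp, fun u => ?_⟩
        by_cases h : u = v
        · right; simp [h]
        · simp only [dif_neg h]
          exact hg'.2 ⟨u, h⟩
      · intro hmem
        have heq := congrFun (show _ = c1 from hmem) (↑a0 : V)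
        simp only [dif_neg (show (a0 : V) ≠ v from a0.2), Subtype.coe_eta, hc1,
          if_neg (show (a0 : V) ≠ v from a0.2)] at heq
        exact ha0 heq
      · funext a
        show (if h : ↑a = v then (1:ℝ) else g' ⟨↑a, h⟩) = g' a
        rw [dif_neg (show (a : V) ≠ v from a.2), Subtype.coe_eta]
  have himagem : res' '' (Sm \ {cm}) = Pm := by
    ext g'
    constructor
    · rintro ⟨g, ⟨hgSm, hgne⟩, rfl⟩
      have hgchar := hSmchar ▸ hgSm
      have hval : ∀ a : {u : V // u ≠ v}, g ↑a = 0 ∨ g ↑a = -1 := fun a => hgchar.2 ↑a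
      have hexoff : ∃ a : {u : V // u ≠ v}, g ↑a ≠ 0 := by
        by_contra hc
        push_neg at hc
        apply hgne
        show g = cm
        funext u
        by_cases h : u = v
        · rw [h, hgchar.1, hcm]; simp
        · rw [hcm]
          simp only [if_neg h]
          exact hc ⟨u, h⟩
      refine ⟨⟨fun a => ?_, fun a b hab => ?_, fun a ha => ?_⟩, fun a => hval a⟩
      · rcases hval a with h | h
        · right; left; exact h
        · right; right; exact h
      · show |g ↑a - g ↑b| ≤ 1
        rcases hval a with h | h <;> rcases hval b with h' | h' <;> rw [h, h'] <;> norm_num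
      · obtain ⟨a0, ha0⟩ := hexoff
        have hane : a ≠ a0 := fun e => ha0 (e ▸ ha)
        exact ⟨a0, hKadj a a0 hane, ha0⟩
    · intro hg'
      obtain ⟨a0, ha0⟩ := hexg g' hg'.1
      refine ⟨fun u => if h : u = v then -1 else g' ⟨u, h⟩, ⟨?_, ?_⟩, ?_⟩
      · rw [hSmchar]
        refine ⟨by simp, fun u => ?_⟩
        by_cases h : u = v
        · right; simp [h]
        · simp only [dif_neg h]
          exact hg'.2 ⟨u, h⟩
      · intro hmem
        have heq := congrFun (show _ = cm from hmem) (↑a0 : V)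
        simp only [dif_neg (show (a0 : V) ≠ v from a0.2), Subtype.coe_eta, hcm,
          if_neg (show (a0 : V) ≠ v from a0.2)] at heq
        exact ha0 heq
      · funext a
        show (if h : ↑a = v then (-1:ℝ) else g' ⟨↑a, h⟩) = g' a
        rw [dif_neg (show (a : V) ≠ v from a.2), Subtype.coe_eta]
  -- assembly
  have hfinAdm := Adm_finite G
  have hfinS0 : S0.Finite := hfinAdm.subset (fun g h => h.1)
  have hfinS1 : S1.Finite := hfinAdm.subset (fun g h => h.1)
  have hfinSm : Sm.Finite := hfinAdm.subset (fun g h => h.1)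
  have hfinP1 : P1.Finite := (Adm_finite K).subset (fun g h => h.1)
  have hfinPm : Pm.Finite := (Adm_finite K).subset (fun g h => h.1)
  have hdisj01 : Disjoint S0 S1 := by
    rw [Set.disjoint_left]
    rintro g ⟨_, h0⟩ ⟨_, h1⟩
    rw [h0] at h1; norm_num at h1
  have hdisj0m : Disjoint S0 Sm := by
    rw [Set.disjoint_left]
    rintro g ⟨_, h0⟩ ⟨_, h1⟩
    rw [h0] at h1; norm_num at h1
  have hdisj1m : Disjoint S1 Sm := by
    rw [Set.disjoint_left]
    rintro g ⟨_, h0⟩ ⟨_, h1⟩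
    rw [h0] at h1; norm_num at h1
  have hsplit : Adm G = S0 ∪ S1 ∪ Sm := by
    ext g
    constructor
    · intro hg
      rcases hg.1 v with h | h | h
      · exact Or.inl (Or.inr ⟨hg, h⟩)
      · exact Or.inl (Or.inl ⟨hg, h⟩)
      · exact Or.inr ⟨hg, h⟩
    · rintro ((h | h) | h) <;> exact h.1
  have hcount : (Adm G).ncard = S0.ncard + S1.ncard + Sm.ncard := by
    rw [hsplit, Set.ncard_union_eq (Set.disjoint_union_left.2 ⟨hdisj0m, hdisj1m⟩)
      (hfinS0.union hfinS1) hfinSm, Set.ncard_union_eq hdisj01 hfinS0 hfinS1]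
  have h0card : S0.ncard = (Adm (G.induce {u : V | u ≠ v})).ncard := by
    rw [← himage0, Set.ncard_image_of_injOn hresInj0]
  have h1card : S1.ncard = P1.ncard + 1 := by
    rw [← Set.ncard_diff_singleton_add_one hc1S1 hfinS1, ← himage1,
      Set.ncard_image_of_injOn hresInj1]
  have hmcard : Sm.ncard = Pm.ncard + 1 := by
    rw [← Set.ncard_diff_singleton_add_one hcmSm hfinSm, ← himagem,
      Set.ncard_image_of_injOn hresInjm]
  have hKcard : (Adm K).ncard = P1.ncard + Pm.ncard := by
    rw [hKsplit, Set.ncard_union_eq hKdisj hfinP1 hfinPm]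
  rw [hcount, h0card, h1card, hmcard, hKcard]
  ring

end Comb

/-- Let `G` be a graph on `[n-1]` with `n ≥ 3` and let `v` be a vertex
of `G` adjacent to every other vertex (`N_G[v] = [n-1]`). Then
`N(P_Ĝ) = N(P_{(G-v)^}) + N(P_{(G/v)^}) + 2`. -/
theorem numFacets_suspension_eq {V : Type*} [Fintype V] [DecidableEq V]
    (G : SimpleGraph V) (hn : 3 ≤ Fintype.card V + 1) (v : V)
    (hNv : ∀ u : V, u = v ∨ G.Adj v u) :
    numFacets (symEdgePolytope (suspension G)) =
      numFacets (symEdgePolytope (suspension (G.induce {u : V | u ≠ v}))) +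
        numFacets (symEdgePolytope (suspension (contractVertex G v))) + 2 := by
  have hcard : 2 ≤ Fintype.card V := by omega
  haveI : Nonempty V := Fintype.card_pos_iff.mp (by omega)
  obtain ⟨w0, hw0⟩ := Fintype.exists_ne_of_one_lt_card (by omega) v
  haveI : Nonempty ↥{u : V | u ≠ v} := ⟨⟨w0, hw0⟩⟩
  haveI : Nonempty {u : V // u ≠ v} := ⟨⟨w0, hw0⟩⟩
  rw [SEP.numFacets_suspension, SEP.numFacets_suspension, SEP.numFacets_suspension]
  exact Adm_count G hcard v hNv
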